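/- Fix g ≥ 1 and distinct nonzero real numbers β₁ < ... < β_K < 0 < β_{K+1} < ... < β_g. Let A be the g×g matrix whose k-th column equals ε_k N_k, where N^j_k = 2πi β_k^{g-j} / (√(β_k²+1) ∏_{ℓ≠k}(β_k − β_ℓ)) and ε_k = +1 for k ≤ K, ε_k = −1 for k > K. Then A is invertible and the first column of 4πi · A^{-1} has j-th entry V_j = ε_j · 2√(β_j² + 1). -/

import Mathlib

open Complex Matrix Finset

/-- Frequency computation with double points on both sides of the origin: with signs
`ε_k = +1` for `k ≤ K` (where `β_k < 0`) and `ε_k = -1` for `k > K`, the matrix `A` with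
`k`-th column `ε_k N_k` is invertible and the first column of `4πi A⁻¹` has `j`-th entry
`V_j = ε_j · 2√(β_j²+1)`. -/
theorem stmt3 (g K : ℕ) (hg : 1 ≤ g) (β : Fin g → ℝ)
    (hmono : StrictMono β) (hne : ∀ k, β k ≠ 0)
    (hK : ∀ k : Fin g, ((k : ℕ) < K ↔ β k < 0))
    (ε : Fin g → ℝ) (hε : ∀ k : Fin g, ε k = if (k : ℕ) < K then 1 else -1)
    (D : Fin g → ℝ)
    (hD : ∀ k, D k = Real.sqrt ((β k) ^ 2 + 1) * ∏ l ∈ Finset.univ.erase k, (β k - β l))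
    (A : Matrix (Fin g) (Fin g) ℂ)
    (hA : ∀ j k, A j k =
      (ε k : ℂ) * (2 * (Real.pi : ℂ) * Complex.I * ((β k : ℂ) ^ (g - 1 - (j : ℕ))) / (D k : ℂ))) :
    IsUnit A ∧
      ∀ j : Fin g, 4 * (Real.pi : ℂ) * Complex.I * (A⁻¹ j ⟨0, hg⟩) =
        ((ε j * (2 * Real.sqrt ((β j) ^ 2 + 1)) : ℝ) : ℂ) := by
  classical
  have hβinj : Function.Injective β := hmono.injective
  set βC : Fin g → ℂ := fun k => (β k : ℂ) with hβC
  have hβCinj : Function.Injective βC := fun a b h => hβinj (by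
    have : ((β a : ℂ)) = (β b : ℂ) := h
    exact_mod_cast this)
  set Q : Fin g → Polynomial ℂ := fun j => Lagrange.nodal (Finset.univ.erase j) βC with hQdef
  have hcard : ∀ j : Fin g, (Finset.univ.erase j).card = g - 1 := by
    intro j
    rw [Finset.card_erase_of_mem (mem_univ j), Finset.card_univ, Fintype.card_fin]
  have hdeg : ∀ j, (Q j).natDegree = g - 1 := by
    intro j; rw [hQdef]; simp [Lagrange.natDegree_nodal, hcard j]
  have hmonic : ∀ j, (Q j).Monic := fun j => Lagrange.nodal_monic
  set E : Fin g → ℂ := fun j => ∏ l ∈ Finset.univ.erase j, (βC j - βC l) with hEdef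
  have hEne : ∀ j, E j ≠ 0 := by
    intro j
    refine Finset.prod_ne_zero_iff.mpr fun l hl => ?_
    rw [sub_ne_zero]
    exact fun h => (Finset.ne_of_mem_erase hl) (hβCinj h.symm)
  have hsqrt : ∀ j : Fin g, (0:ℝ) < Real.sqrt ((β j) ^ 2 + 1) := by
    intro j; exact Real.sqrt_pos.mpr (by positivity)
  have hDC : ∀ j, (D j : ℂ) = (Real.sqrt ((β j) ^ 2 + 1) : ℂ) * E j := by
    intro j; rw [hD j]; push_cast; rfl
  have hDne : ∀ j, (D j : ℂ) ≠ 0 := by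
    intro j; rw [hDC j]
    exact mul_ne_zero (by exact_mod_cast (hsqrt j).ne') (hEne j)
  have hε2 : ∀ j, (ε j : ℂ) * (ε j : ℂ) = 1 := by
    intro j; rw [hε j]; split <;> norm_num
  have hεne : ∀ j, (ε j : ℂ) ≠ 0 := by
    intro j h
    have := hε2 j; rw [h, mul_zero] at this; exact zero_ne_one this
  have hπI : (2 : ℂ) * (Real.pi : ℂ) * Complex.I ≠ 0 := by
    simp [Real.pi_ne_zero, Complex.I_ne_zero, Complex.ofReal_ne_zero]
  set B : Matrix (Fin g) (Fin g) ℂ :=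
    fun j i => (D j : ℂ) / ((ε j : ℂ) * (2 * (Real.pi : ℂ) * Complex.I) * E j) *
      (Q j).coeff (g - 1 - (i : ℕ)) with hBdef
  -- key evaluation identity
  have hsum : ∀ (j : Fin g) (x : ℂ),
      ∑ i : Fin g, (Q j).coeff (g - 1 - (i : ℕ)) * x ^ (g - 1 - (i : ℕ)) =
        Polynomial.eval x (Q j) := by
    intro j x
    have h1 : Polynomial.eval x (Q j) = ∑ n ∈ Finset.range g, (Q j).coeff n * x ^ n :=
      Polynomial.eval_eq_sum_range' (by rw [hdeg j]; omega) x
    rw [h1, Fin.sum_univ_eq_sum_range (fun i => (Q j).coeff (g - 1 - i) * x ^ (g - 1 - i)) g]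
    exact Finset.sum_range_reflect (fun n => (Q j).coeff n * x ^ n) g
  have hBA : B * A = 1 := by
    ext j k
    rw [Matrix.mul_apply]
    simp only [hBdef, hA]
    have hterm : ∀ i : Fin g, (D j : ℂ) / ((ε j : ℂ) * (2 * (Real.pi : ℂ) * Complex.I) * E j) *
        (Q j).coeff (g - 1 - (i : ℕ)) *
        ((ε k : ℂ) * (2 * (Real.pi : ℂ) * Complex.I * (((β k : ℝ) : ℂ) ^ (g - 1 - (i : ℕ))) / (D k : ℂ))) =
        ((D j : ℂ) / ((ε j : ℂ) * (2 * (Real.pi : ℂ) * Complex.I) * E j) *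
          ((ε k : ℂ) * (2 * (Real.pi : ℂ) * Complex.I) / (D k : ℂ))) *
          ((Q j).coeff (g - 1 - (i : ℕ)) * ((β k : ℝ) : ℂ) ^ (g - 1 - (i : ℕ)))
       := fun i => by ring
    simp only [hterm]
    rw [← Finset.mul_sum, hsum j (βC k)]
    by_cases hjk : j = k
    · subst hjk
      have heval : Polynomial.eval (βC j) (Q j) = E j := by
        rw [hQdef]; exact Lagrange.eval_nodal
      rw [heval, Matrix.one_apply_eq]
      have hpne : ((Real.pi : ℝ) : ℂ) ≠ 0 := Complex.ofReal_ne_zero.mpr Real.pi_ne_zero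
      field_simp [hDne j, hεne j, hEne j, Complex.I_ne_zero, hpne]
    · have hk : k ∈ Finset.univ.erase j := Finset.mem_erase.mpr ⟨fun h => hjk h.symm, mem_univ k⟩
      have heval : Polynomial.eval (βC k) (Q j) = 0 := by
        rw [hQdef]; exact Lagrange.eval_nodal_at_node hk
      rw [heval, mul_zero, Matrix.one_apply_ne hjk]
  have hAB : A * B = 1 := mul_eq_one_comm.mpr hBA
  have hInv : A⁻¹ = B := Matrix.inv_eq_right_inv hAB
  refine ⟨(Matrix.isUnit_iff_isUnit_det A).mpr (Matrix.isUnit_det_of_left_inverse hBA), fun j => ?_⟩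
  rw [hInv]
  have hcoeff : (Q j).coeff (g - 1 - ((⟨0, hg⟩ : Fin g) : ℕ)) = 1 := by
    have : g - 1 - ((⟨0, hg⟩ : Fin g) : ℕ) = (Q j).natDegree := by
      rw [hdeg j]; rfl
    rw [this]; exact (hmonic j).coeff_natDegree
  show 4 * (Real.pi : ℂ) * Complex.I *
      ((D j : ℂ) / ((ε j : ℂ) * (2 * (Real.pi : ℂ) * Complex.I) * E j) *
        (Q j).coeff (g - 1 - ((⟨0, hg⟩ : Fin g) : ℕ))) = _
  rw [hcoeff, mul_one, hDC j]
  have hεval : (ε j : ℂ) = 1 ∨ (ε j : ℂ) = -1 := by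
    rw [hε j]; split <;> norm_num
  have hpush : ((ε j * (2 * Real.sqrt ((β j) ^ 2 + 1)) : ℝ) : ℂ) =
      (ε j : ℂ) * (2 * (Real.sqrt ((β j) ^ 2 + 1) : ℂ)) := by push_cast; ring
  rw [hpush]
  have hpne : ((Real.pi : ℝ) : ℂ) ≠ 0 := Complex.ofReal_ne_zero.mpr Real.pi_ne_zero
  rcases hεval with h | h <;> rw [h] <;>
    · field_simp [hEne j, Complex.I_ne_zero, hpne]
      ring
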